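/- Let u : R → R be a convex increasing function with u(x) ≤ log √(1 + e^{2x}) for all x, and suppose lim_{x→-∞} (u(x) - νx) exists and is finite for some 0 < ν < 1. Then u(x) ≤ ν x + C_ν for all x ≤ log R_ν, where R_ν = (ν/(1-ν))^{1/2} and C_ν = log √(1+R_ν²) − ν log R_ν. -/
import Mathlib


/-- If u : ℝ → ℝ is convex increasing with u(x) ≤ log √(1+e^{2x}) and u(x) − νx has a
finite limit as x → −∞ (0 < ν < 1), then u(x) ≤ νx + C_ν for all x ≤ log R_ν, where
R_ν = √(ν/(1-ν)) and C_ν = log √(1+R_ν²) − ν log R_ν. -/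
theorem stmt_5 (ν : ℝ) (h0 : 0 < ν) (h1 : ν < 1) (u : ℝ → ℝ)
    (hconv : ConvexOn ℝ Set.univ u) (hmono : Monotone u)
    (hle : ∀ x : ℝ, u x ≤ Real.log (Real.sqrt (1 + Real.exp (2 * x))))
    (L : ℝ) (hL : Filter.Tendsto (fun x => u x - ν * x) Filter.atBot (nhds L)) :
    let R : ℝ := Real.sqrt (ν / (1 - ν))
    let C : ℝ := Real.log (Real.sqrt (1 + R ^ 2)) - ν * Real.log R
    ∀ x : ℝ, x ≤ Real.log R → u x ≤ ν * x + C := by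
  intro R C x hx
  set h : ℝ → ℝ := fun x => u x - ν * x with hh
  -- h is nondecreasing
  have hmonoh : ∀ a b : ℝ, a ≤ b → h a ≤ h b := by
    intro a b hab
    rcases eq_or_lt_of_le hab with rfl | hab
    · exact le_rfl
    by_contra hcon
    push_neg at hcon
    set s : ℝ := (h b - h a) / (b - a) with hs
    have hsneg : s < 0 := div_neg_of_neg_of_pos (by linarith) (by linarith)
    -- from tendsto, get a bound
    have hev : ∀ᶠ y in Filter.atBot, h y < L + 1 :=
      hL.eventually (gt_mem_nhds (lt_add_one L))
    obtain ⟨b0, hb0⟩ := Filter.eventually_atBot.mp hev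
    set x1 : ℝ := min b0 (min (a - 1) (a + (L + 1 - h a) / s - 1)) with hx1
    have hx1a : x1 < a := lt_of_le_of_lt (le_trans (min_le_right _ _) (min_le_left _ _)) (by linarith)
    have hslope := hconv.slope_mono_adjacent (Set.mem_univ x1) (Set.mem_univ b) hx1a hab
    -- slope of h = slope of u - ν
    have hsl1 : (h a - h x1) / (a - x1) ≤ s := by
      rw [hs, hh]
      have hne1 : a - x1 ≠ 0 := by intro hc; linarith [hx1a]
      have hne2 : b - a ≠ 0 := by intro hc; linarith
      have e1 : (u a - ν * a - (u x1 - ν * x1)) / (a - x1)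
          = (u a - u x1) / (a - x1) - ν := by
        field_simp
        ring
      have e2 : (u b - ν * b - (u a - ν * a)) / (b - a)
          = (u b - u a) / (b - a) - ν := by
        field_simp
        ring
      simp only [e1, e2]
      linarith [hslope]
    have hax1 : 0 < a - x1 := by linarith
    have h1 : h a - h x1 ≤ s * (a - x1) := by
      rw [div_le_iff₀ hax1] at hsl1; linarith
    -- lower bound for h x1
    have hxs : x1 - a ≤ (L + 1 - h a) / s - 1 := by
      have : x1 ≤ a + (L + 1 - h a) / s - 1 :=
        le_trans (min_le_right _ _) (min_le_right _ _)
      linarith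
    have h2 : s * (x1 - a) ≥ (L + 1 - h a) - s := by
      have := mul_le_mul_of_nonpos_left hxs (le_of_lt hsneg)
      calc s * (x1 - a) ≥ s * ((L + 1 - h a) / s - 1) := this
        _ = (L + 1 - h a) - s := by
            have hsne : s ≠ 0 := ne_of_lt hsneg
            field_simp
    have hlow : h x1 > L + 1 := by nlinarith
    have hup : h x1 < L + 1 := hb0 x1 (min_le_left _ _)
    linarith
  -- value at x₀ = log R
  have hRpos : (0:ℝ) < R := Real.sqrt_pos.mpr (div_pos h0 (by linarith))
  have hexp : Real.exp (2 * Real.log R) = R ^ 2 := by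
    rw [mul_comm, Real.exp_mul, Real.exp_log hRpos]
    norm_num
  have hx0 : u (Real.log R) ≤ ν * Real.log R + C := by
    have := hle (Real.log R)
    rw [hexp] at this
    simp only [C]
    linarith
  have := hmonoh x (Real.log R) hx
  simp only [hh] at this
  linarith
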